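/- The image of an analytic disc attached to a bounded set X ⊆ ℂⁿ is contained in the closed convex hull of X: if φ : closure(D) → ℂⁿ is continuous, holomorphic on D, and φ(∂D) ⊆ X, then φ(closure(D)) ⊆ closedConvexHull(X). -/

import Mathlib

open Metric Complex Set

theorem attached_disc_in_closed_convex_hull
    (n : ℕ) (X : Set (Fin n → ℂ)) (hX : X.Nonempty) (hXb : Bornology.IsBounded X)
    (φ : ℂ → (Fin n → ℂ))
    (hc : ContinuousOn φ (closedBall 0 1))
    (hd : DifferentiableOn ℂ φ (ball 0 1))
    (hb : φ '' sphere (0 : ℂ) 1 ⊆ X) :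
    φ '' closedBall (0 : ℂ) 1 ⊆ closure (convexHull ℝ X) := by
  rintro _ ⟨z, hz, rfl⟩
  by_contra hmem
  obtain ⟨f, u, hfu, huf⟩ := geometric_hahn_banach_closed_point
    (convex_convexHull ℝ X).closure isClosed_closure hmem
  -- complex-linear extension L with Re ∘ L = f
  set L : (Fin n → ℂ) →L[ℂ] ℂ := f.extendTo𝕜'
  have hre : ∀ v, (L v).re = f v := fun v =>
    f.toLinearMap.extendTo𝕜'_apply_re (𝕜 := ℂ) v
  -- g = exp ∘ L ∘ φ
  set g : ℂ → ℂ := fun w => Complex.exp (L (φ w))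
  have hcl : closure (ball (0:ℂ) 1) = closedBall (0:ℂ) 1 := closure_ball 0 one_ne_zero
  have hgd : DiffContOnCl ℂ g (ball (0:ℂ) 1) := by
    refine ⟨?_, ?_⟩
    · intro w hw
      have h1 : DifferentiableWithinAt ℂ (fun x => L (φ x)) (ball 0 1) w :=
        L.differentiableAt.comp_differentiableWithinAt w (hd w hw)
      exact (Complex.differentiableAt_exp).comp_differentiableWithinAt w h1
    · rw [hcl]
      exact Complex.continuous_exp.comp_continuousOn (L.continuous.comp_continuousOn hc)
  have hnorm : ∀ w, ‖g w‖ = Real.exp (f (φ w)) := by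
    intro w
    rw [show ‖g w‖ = ‖Complex.exp (L (φ w))‖ from rfl, Complex.norm_exp, hre]
  have hbound : ∀ w ∈ frontier (ball (0:ℂ) 1), ‖g w‖ ≤ Real.exp u := by
    intro w hw
    rw [frontier_ball 0 one_ne_zero] at hw
    have hwX : φ w ∈ X := hb ⟨w, hw, rfl⟩
    have : f (φ w) < u := hfu _ (subset_closure (subset_convexHull ℝ X hwX))
    rw [hnorm]
    exact (Real.exp_le_exp.mpr this.le)
  have hle : ‖g z‖ ≤ Real.exp u := by
    have := Complex.norm_le_of_forall_mem_frontier_norm_le isBounded_ball hgd hbound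
      (by rwa [hcl])
    exact this
  rw [hnorm] at hle
  exact absurd (Real.exp_le_exp.mp hle) (not_le.mpr huf)
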